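/- Suppose a_{i,k} > a_{j,k} for all k = 1,...,n. Then along any solution of the mean-field system starting in the open simplex, the ratio u_i/u_j satisfies d/dt (u_i/u_j) >= Gamma (u_i/u_j) where Gamma = min_k (a_{i,k} - a_{j,k}) / max_m a_{m,k} > 0, and consequently u_j(t) <= (u_j(0)/u_i(0)) e^{-Gamma t} -> 0 as t -> infinity. -/

import Mathlib

open Finset

theorem ratio_growth_and_extinction
    (n : ℕ) (a : Fin n → Fin n → ℝ)
    (ha : ∀ m k, 0 ≤ a m k)
    (hcol : ∀ k, ∃ m, 0 < a m k)
    (i j : Fin n) (hij : i ≠ j)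
    (hdom : ∀ k, a j k < a i k)
    (u : ℝ → Fin n → ℝ)
    (hopen : ∀ t, 0 ≤ t → (∀ m, 0 < u t m) ∧ ∑ m, u t m = 1)
    (hsol : ∀ t, 0 ≤ t → ∀ m,
      HasDerivAt (fun s => u s m)
        (((∑ k, a m k * u t k / (∑ l, a l k * u t l)) - 1) * u t m) t) :
    0 < (Finset.univ.inf' ⟨i, Finset.mem_univ i⟩
          (fun k => (a i k - a j k) / Finset.univ.sup' ⟨i, Finset.mem_univ i⟩ (fun m => a m k))) ∧
    (∀ t, 0 ≤ t →
      deriv (fun s => u s i / u s j) t ≥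
        (Finset.univ.inf' ⟨i, Finset.mem_univ i⟩
          (fun k => (a i k - a j k) / Finset.univ.sup' ⟨i, Finset.mem_univ i⟩ (fun m => a m k)))
        * (u t i / u t j)) ∧
    (∀ t, 0 ≤ t →
      u t j ≤ (u 0 j / u 0 i) * Real.exp
        (-(Finset.univ.inf' ⟨i, Finset.mem_univ i⟩
          (fun k => (a i k - a j k) / Finset.univ.sup' ⟨i, Finset.mem_univ i⟩ (fun m => a m k))) * t)) ∧
    Filter.Tendsto (fun t => u t j) Filter.atTop (nhds 0) := by
  set M : Fin n → ℝ := fun k => Finset.univ.sup' ⟨i, Finset.mem_univ i⟩ (fun m => a m k) with hM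
  set Γ : ℝ := Finset.univ.inf' ⟨i, Finset.mem_univ i⟩ (fun k => (a i k - a j k) / M k) with hΓ
  have haleM : ∀ m k, a m k ≤ M k := by
    intro m k
    rw [hM]
    exact Finset.le_sup' (fun m => a m k) (Finset.mem_univ m)
  have hMpos : ∀ k, 0 < M k := fun k =>
    lt_of_lt_of_le (lt_of_le_of_lt (ha j k) (hdom k)) (haleM i k)
  have hΓpos : 0 < Γ := by
    rw [hΓ]
    exact (Finset.lt_inf'_iff _).2 fun k _ =>
      div_pos (sub_pos.mpr (hdom k)) (hMpos k)
  have hΓle : ∀ k, Γ ≤ (a i k - a j k) / M k := fun k =>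
    Finset.inf'_le _ (Finset.mem_univ k)
  -- positivity of the denominators S t k
  have hSpos : ∀ t, 0 ≤ t → ∀ k, 0 < ∑ l, a l k * u t l := by
    intro t ht k
    refine Finset.sum_pos' (fun l _ => mul_nonneg (ha l k) ((hopen t ht).1 l).le) ?_
    exact ⟨i, Finset.mem_univ i, mul_pos (lt_of_le_of_lt (ha j k) (hdom k)) ((hopen t ht).1 i)⟩
  have hSleM : ∀ t, 0 ≤ t → ∀ k, (∑ l, a l k * u t l) ≤ M k := by
    intro t ht k
    calc ∑ l, a l k * u t l ≤ ∑ l, M k * u t l :=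
          Finset.sum_le_sum fun l _ =>
            mul_le_mul_of_nonneg_right (haleM l k) ((hopen t ht).1 l).le
      _ = M k * ∑ l, u t l := by rw [Finset.mul_sum]
      _ = M k := by rw [(hopen t ht).2, mul_one]
  -- core inequality
  have hcore : ∀ t, 0 ≤ t →
      Γ ≤ ∑ k, (a i k - a j k) * u t k / (∑ l, a l k * u t l) := by
    intro t ht
    calc Γ = Γ * ∑ k, u t k := by rw [(hopen t ht).2, mul_one]
      _ = ∑ k, Γ * u t k := by rw [Finset.mul_sum]
      _ ≤ ∑ k, (a i k - a j k) * u t k / (∑ l, a l k * u t l) := by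
          refine Finset.sum_le_sum fun k _ => ?_
          have h1 : Γ * u t k ≤ ((a i k - a j k) / M k) * u t k :=
            mul_le_mul_of_nonneg_right (hΓle k) ((hopen t ht).1 k).le
          have h2 : ((a i k - a j k) / M k) * u t k
              ≤ (a i k - a j k) * u t k / (∑ l, a l k * u t l) := by
            rw [div_mul_eq_mul_div]
            exact div_le_div_of_nonneg_left
              (mul_nonneg (sub_pos.mpr (hdom k)).le ((hopen t ht).1 k).le)
              (hSpos t ht k) (hSleM t ht k)
          linarith
  -- derivative of the ratio
  have hr : ∀ t, 0 ≤ t →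
      HasDerivAt (fun s => u s i / u s j)
        ((∑ k, (a i k - a j k) * u t k / (∑ l, a l k * u t l)) * (u t i / u t j)) t := by
    intro t ht
    have hj0 : u t j ≠ 0 := ((hopen t ht).1 j).ne'
    have hd := (hsol t ht i).div (hsol t ht j) hj0
    refine hd.congr_deriv ?_
    have hsum : ∑ k, (a i k - a j k) * u t k / (∑ l, a l k * u t l)
        = (∑ k, a i k * u t k / (∑ l, a l k * u t l))
          - (∑ k, a j k * u t k / (∑ l, a l k * u t l)) := by
      rw [← Finset.sum_sub_distrib]
      exact Finset.sum_congr rfl fun k _ => by ring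
    rw [hsum]
    field_simp
    ring
  have hrpos : ∀ t, 0 ≤ t → 0 < u t i / u t j := fun t ht =>
    div_pos ((hopen t ht).1 i) ((hopen t ht).1 j)
  have part2 : ∀ t, 0 ≤ t →
      deriv (fun s => u s i / u s j) t ≥ Γ * (u t i / u t j) := by
    intro t ht
    rw [(hr t ht).deriv]
    exact mul_le_mul_of_nonneg_right (hcore t ht) (hrpos t ht).le
  -- Gronwall
  set g : ℝ → ℝ := fun s => (u s i / u s j) * Real.exp (-Γ * s) with hgdef
  have hg : ∀ t, 0 ≤ t →
      HasDerivAt g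
        (((∑ k, (a i k - a j k) * u t k / (∑ l, a l k * u t l)) - Γ)
          * (u t i / u t j) * Real.exp (-Γ * t)) t := by
    intro t ht
    have hexp : HasDerivAt (fun s : ℝ => Real.exp (-Γ * s))
        (Real.exp (-Γ * t) * (-Γ * 1)) t := ((hasDerivAt_id t).const_mul (-Γ)).exp
    have := (hr t ht).mul hexp
    refine this.congr_deriv ?_
    ring
  have hgmono : MonotoneOn g (Set.Ici (0 : ℝ)) := by
    apply monotoneOn_of_deriv_nonneg (convex_Ici 0)
    · intro x hx
      exact (hg x hx).continuousAt.continuousWithinAt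
    · rw [interior_Ici]
      intro x hx
      exact (hg x hx.le).differentiableAt.differentiableWithinAt
    · rw [interior_Ici]
      intro x hx
      rw [(hg x hx.le).deriv]
      have h1 : 0 ≤ (∑ k, (a i k - a j k) * u x k / (∑ l, a l k * u x l)) - Γ :=
        sub_nonneg.mpr (hcore x hx.le)
      exact mul_nonneg (mul_nonneg h1 (hrpos x hx.le).le) (Real.exp_pos _).le
  have part3 : ∀ t, 0 ≤ t →
      u t j ≤ (u 0 j / u 0 i) * Real.exp (-Γ * t) := by
    intro t ht
    have hge := hgmono (Set.self_mem_Ici) ht ht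
    have h0i := (hopen 0 le_rfl).1 i
    have h0j := (hopen 0 le_rfl).1 j
    have hti := (hopen t ht).1 i
    have htj := (hopen t ht).1 j
    have hg0 : g 0 = u 0 i / u 0 j := by
      simp [hgdef]
    rw [hg0, hgdef] at hge
    simp only at hge
    have hti1 : u t i ≤ 1 := by
      have := Finset.single_le_sum (fun m _ => ((hopen t ht).1 m).le) (Finset.mem_univ i)
      rw [(hopen t ht).2] at this
      exact this
    have hkey : u 0 i * u t j ≤ u 0 j * Real.exp (-Γ * t) := by
      rw [div_mul_eq_mul_div, div_le_div_iff₀ h0j htj] at hge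
      nlinarith [Real.exp_pos (-Γ * t), mul_le_mul_of_nonneg_right hti1 (mul_nonneg (Real.exp_pos (-Γ * t)).le h0j.le)]
    rw [div_mul_eq_mul_div, le_div_iff₀ h0i]
    linarith
  refine ⟨hΓpos, part2, part3, ?_⟩
  have hexp0 : Filter.Tendsto (fun t : ℝ => (u 0 j / u 0 i) * Real.exp (-Γ * t))
      Filter.atTop (nhds 0) := by
    have h1 : Filter.Tendsto (fun t : ℝ => -Γ * t) Filter.atTop Filter.atBot := by
      exact Filter.Tendsto.const_mul_atTop_of_neg (neg_neg_iff_pos.mpr hΓpos) Filter.tendsto_id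
    have h2 := Real.tendsto_exp_atBot.comp h1
    have := h2.const_mul (u 0 j / u 0 i)
    simpa using this
  apply squeeze_zero'
  · exact Filter.eventually_atTop.mpr ⟨0, fun t ht => ((hopen t ht).1 j).le⟩
  · exact Filter.eventually_atTop.mpr ⟨0, fun t ht => part3 t ht⟩
  · exact hexp0
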